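/- The factor (−(a+b)c + d²) divides det(M_R^(2)) with multiplicity at least 2, as a polynomial identity in ℤ[a,b,c,d]: det(M_R^(2)) = −d^4·(c(2(a+b)+c) − d²)·(d² − (a+b)c)². -/

import Mathlib

/-- The rule matrix `M_R^(2)` of the level-2 null-boundary cellular automaton on the
Cayley tree of order 2, with rows/columns indexed by the vertices
`x₀, x₁, x₂, x₃, x₁₁, x₁₂, x₂₁, x₂₂, x₃₁, x₃₂` (Example 1 of the paper). -/
def M2 (R : Type*) [CommRing R] (a b c d : R) : Matrix (Fin 10) (Fin 10) R :=
  !![d, a, b, c, 0, 0, 0, 0, 0, 0;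
     c, d, 0, 0, a, b, 0, 0, 0, 0;
     c, 0, d, 0, 0, 0, a, b, 0, 0;
     c, 0, 0, d, 0, 0, 0, 0, a, b;
     0, c, 0, 0, d, 0, 0, 0, 0, 0;
     0, c, 0, 0, 0, d, 0, 0, 0, 0;
     0, 0, c, 0, 0, 0, d, 0, 0, 0;
     0, 0, c, 0, 0, 0, 0, d, 0, 0;
     0, 0, 0, c, 0, 0, 0, 0, d, 0;
     0, 0, 0, c, 0, 0, 0, 0, 0, d]

section Blocks
variable {R : Type*} [CommRing R]

def bA (a b c d : R) : Matrix (Fin 4) (Fin 4) R :=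
  !![d, a, b, c; c, d, 0, 0; c, 0, d, 0; c, 0, 0, d]

def bB (a b : R) : Matrix (Fin 4) (Fin 6) R :=
  !![0, 0, 0, 0, 0, 0; a, b, 0, 0, 0, 0; 0, 0, a, b, 0, 0; 0, 0, 0, 0, a, b]

def bC (c : R) : Matrix (Fin 6) (Fin 4) R :=
  !![0, c, 0, 0; 0, c, 0, 0; 0, 0, c, 0; 0, 0, c, 0; 0, 0, 0, c; 0, 0, 0, c]

def bD (d : R) : Matrix (Fin 6) (Fin 6) R :=
  !![d, 0, 0, 0, 0, 0; 0, d, 0, 0, 0, 0; 0, 0, d, 0, 0, 0;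
     0, 0, 0, d, 0, 0; 0, 0, 0, 0, d, 0; 0, 0, 0, 0, 0, d]

def bP (d : R) : Matrix (Fin 4) (Fin 4) R :=
  !![d, 0, 0, 0; 0, d, 0, 0; 0, 0, d, 0; 0, 0, 0, d]

def bE (a b c d : R) : Matrix (Fin 4) (Fin 4) R :=
  !![d*d, a*d, b*d, c*d;
     c*d, d*d - (a+b)*c, 0, 0;
     c*d, 0, d*d - (a+b)*c, 0;
     c*d, 0, 0, d*d - (a+b)*c]

set_option maxHeartbeats 3200000 in
theorem M2_eq (a b c d : R) :
    M2 R a b c d =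
      (Matrix.fromBlocks (bA a b c d) (bB a b) (bC c) (bD d)).submatrix
        finSumFinEquiv.symm finSumFinEquiv.symm := by
  ext i j
  fin_cases i <;> fin_cases j <;> rfl

set_option maxHeartbeats 6400000 in
theorem h11 (a b c d : R) : bA a b c d * bP d + bB a b * -bC c = bE a b c d := by
  ext i j
  fin_cases i <;> fin_cases j <;>
    simp [bA, bB, bC, bP, bE, Matrix.mul_apply, Fin.sum_univ_succ] <;>
    first
      | rfl
      | ring
      | (simp [Matrix.vecHead, Matrix.vecTail, Function.comp] <;> ring)

set_option maxHeartbeats 3200000 in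
theorem hDsmul (d : R) : bD d = d • (1 : Matrix (Fin 6) (Fin 6) R) := by
  ext i j
  fin_cases i <;> fin_cases j <;>
    simp [bD, Matrix.one_apply] <;> rfl

set_option maxHeartbeats 3200000 in
theorem hPsmul (d : R) : bP d = d • (1 : Matrix (Fin 4) (Fin 4) R) := by
  ext i j
  fin_cases i <;> fin_cases j <;>
    simp [bP, Matrix.one_apply] <;> rfl

theorem h21 (c d : R) : bC c * bP d + bD d * -bC c = 0 := by
  rw [hPsmul, hDsmul, Matrix.mul_smul, Matrix.smul_mul, Matrix.mul_one, Matrix.one_mul]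
  simp

set_option maxHeartbeats 3200000 in
theorem hmul (a b c d : R) :
    Matrix.fromBlocks (bA a b c d) (bB a b) (bC c) (bD d) *
      Matrix.fromBlocks (bP d) 0 (-(bC c)) 1 =
    Matrix.fromBlocks (bE a b c d) (bB a b) 0 (bD d) := by
  rw [Matrix.fromBlocks_multiply, h11, h21]
  simp

set_option maxHeartbeats 3200000 in
theorem det_bP (d : R) : (bP d).det = d ^ 4 := by
  simp [bP, Matrix.det_succ_row_zero, Fin.sum_univ_succ]
  ring

set_option maxRecDepth 40000 in
set_option maxHeartbeats 12800000 in
theorem det_bD (d : R) : (bD d).det = d ^ 6 := by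
  simp [bD, Matrix.det_succ_row_zero, Fin.sum_univ_succ]
  ring

set_option maxRecDepth 40000 in
set_option maxHeartbeats 3200000 in
theorem det_bE (a b c d : R) :
    (bE a b c d).det = d ^ 2 * -(c * (2 * (a + b) + c) - d ^ 2) * (d ^ 2 - (a + b) * c) ^ 2 := by
  simp [bE, Matrix.det_succ_row_zero, Fin.sum_univ_succ, Fin.succAbove, Fin.castSucc, Fin.castAdd, Fin.castLE,
    Matrix.vecHead, Matrix.vecTail]
  ring

theorem key (a b c d : R) :
    d ^ 4 * (M2 R a b c d).det =
      d ^ 4 * (-d ^ 4 * (c * (2 * (a + b) + c) - d ^ 2) * (d ^ 2 - (a + b) * c) ^ 2) := by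
  have h1 : (M2 R a b c d).det =
      (Matrix.fromBlocks (bA a b c d) (bB a b) (bC c) (bD d)).det := by
    rw [M2_eq, Matrix.det_submatrix_equiv_self]
  have hdetmul := congrArg Matrix.det (hmul a b c d)
  rw [Matrix.det_mul, Matrix.det_fromBlocks_zero₁₂, Matrix.det_fromBlocks_zero₂₁,
    Matrix.det_one, det_bP, det_bD, det_bE] at hdetmul
  rw [h1]
  linear_combination hdetmul

end Blocks

open MvPolynomial

/-- As a polynomial identity in `ℤ[a,b,c,d]`:
`det(M_R^(2)) = −d⁴·(c(2(a+b)+c) − d²)·(d² − (a+b)c)²`; in particular the factor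
`−(a+b)c + d²` divides `det(M_R^(2))` with multiplicity at least 2. -/
theorem det_M2_polynomial_identity :
    (M2 (MvPolynomial (Fin 4) ℤ) (X 0) (X 1) (X 2) (X 3)).det =
      -(X 3 : MvPolynomial (Fin 4) ℤ) ^ 4 *
        (X 2 * (2 * (X 0 + X 1) + X 2) - X 3 ^ 2) *
        (X 3 ^ 2 - (X 0 + X 1) * X 2) ^ 2 := by
  have hd : (X 3 : MvPolynomial (Fin 4) ℤ) ≠ 0 := X_ne_zero 3
  exact mul_left_cancel₀ (pow_ne_zero 4 hd) (key (X 0) (X 1) (X 2) (X 3))
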